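/- Let K_{2,n} (n ≥ 1) be the complete bipartite graph with partite sets {v₁,v₂} and {w₁,…,w_n}. For a nonnegative integer table M : {0,1}^V → ℕ and for i, j, k ∈ {0,1} and l ∈ {1,…,n}, set b_{ij,k,l}(M) = Σ_{I : I(v₁)=i, I(v₂)=j, I(w_l)=k} M(I). If M and N are nonnegative integer tables with b_{ij,k,l}(M) = b_{ij,k,l}(N) for all i, j, k ∈ {0,1} and all l ∈ {1,…,n}, then the binomial p^M − p^N (where p^M = ∏_I p_I^{M(I)}) lies in the ideal of R_{K_{2,n}} generated by the elements of I_{K_{2,n}} of total degree 2. -/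

import Mathlib

open MvPolynomial Finset

namespace BinaryGraphModels

variable {V : Type} [Fintype V] [DecidableEq V]

/-- The monomial map `φ_G` of the binary graph model: the variable `p_I` is sent to the
product over edges `{j,k}` of the variable `t^{jk}_{I(j)I(k)}` (encoded as the unordered pair
`{(j, I j), (k, I k)}`) times the product over isolated vertices `l` of `t^{l}_{I(l)}`. -/
noncomputable def phi (G : SimpleGraph V) :
    MvPolynomial (V → Bool) ℂ →ₐ[ℂ] MvPolynomial (Sym2 (V × Bool) ⊕ (V × Bool)) ℂ := by
  letI : DecidableRel G.Adj := Classical.decRel _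
  exact aeval fun I : V → Bool =>
    (∏ e ∈ G.edgeFinset,
      (X (Sum.inl (Sym2.map (fun v => (v, I v)) e)) :
        MvPolynomial (Sym2 (V × Bool) ⊕ (V × Bool)) ℂ)) *
    ∏ l ∈ univ.filter (fun l : V => ∀ k, ¬ G.Adj l k), X (Sum.inr (l, I l))

/-- The toric ideal `I_G` of the binary graph model of `G`. -/
noncomputable def toricIdeal (G : SimpleGraph V) : Ideal (MvPolynomial (V → Bool) ℂ) :=
  RingHom.ker (phi G).toRingHom

/-- `I_G` is generated in degree at most `d`. -/
def GenInDegLE (G : SimpleGraph V) (d : ℕ) : Prop :=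
  toricIdeal G =
    Ideal.span {f : MvPolynomial (V → Bool) ℂ | f ∈ toricIdeal G ∧ f.totalDegree ≤ d}

/-- The Markov width `μ(G)`: the least `d` such that `I_G` is generated in degree `≤ d`. -/
noncomputable def markovWidth (G : SimpleGraph V) : ℕ :=
  sInf {d : ℕ | GenInDegLE G d}

/-- `f` is a minimal generator of `I_G`, i.e. `f ∈ I_G` and `f ∉ 𝔪 · I_G` where `𝔪` is the
irrelevant maximal ideal generated by all the variables. -/
def IsMinimalGenerator (G : SimpleGraph V) (f : MvPolynomial (V → Bool) ℂ) : Prop :=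
  f ∈ toricIdeal G ∧
    f ∉ Ideal.span (Set.range (X : (V → Bool) → MvPolynomial (V → Bool) ℂ)) * toricIdeal G

/-- Two integer tables have the same `G`-marginals: equal two-way marginals along every edge
and equal one-way marginals at every isolated vertex. -/
def MarginalsEq (G : SimpleGraph V) (v₁ v₂ : (V → Bool) → ℤ) : Prop :=
  (∀ j k : V, G.Adj j k → ∀ a b : Bool,
    (∑ I : V → Bool, if I j = a ∧ I k = b then v₁ I else 0) =
    (∑ I : V → Bool, if I j = a ∧ I k = b then v₂ I else 0)) ∧
  (∀ l : V, (∀ k, ¬ G.Adj l k) → ∀ a : Bool,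
    (∑ I : V → Bool, if I l = a then v₁ I else 0) =
    (∑ I : V → Bool, if I l = a then v₂ I else 0))

/-- `B` is a Markov basis for `G`: any two nonnegative tables with the same `G`-marginals are
connected by a path of moves from `±B` staying nonnegative. -/
def IsMarkovBasis (G : SimpleGraph V) (B : Finset ((V → Bool) → ℤ)) : Prop :=
  ∀ v₁ v₂ : (V → Bool) → ℤ, (∀ I, 0 ≤ v₁ I) → (∀ I, 0 ≤ v₂ I) →
    MarginalsEq G v₁ v₂ →
    ∃ L : List ((V → Bool) → ℤ),
      (∀ u ∈ L, u ∈ B ∨ -u ∈ B) ∧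
      v₁ + L.sum = v₂ ∧
      ∀ n : ℕ, n ≤ L.length → ∀ I, 0 ≤ (v₁ + (L.take n).sum) I

/-- The binomial `p^{u⁺} - p^{u⁻}` associated to an integer table `u`. -/
noncomputable def moveBinomial (u : (V → Bool) → ℤ) : MvPolynomial (V → Bool) ℂ :=
  (∏ I : V → Bool, X I ^ (u I).toNat) - ∏ I : V → Bool, X I ^ (-u I).toNat

end BinaryGraphModels

namespace BinaryGraphModels

/-! ### Auxiliary material for Statement 8 -/

section Aux

lemma phi_X {V : Type} [Fintype V] (G : SimpleGraph V) [DecidableRel G.Adj] (I : V → Bool) :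
    phi G (X I) =
    (∏ e ∈ G.edgeFinset,
      (X (Sum.inl (Sym2.map (fun v => (v, I v)) e)) :
        MvPolynomial (Sym2 (V × Bool) ⊕ (V × Bool)) ℂ)) *
    ∏ l ∈ univ.filter (fun l : V => ∀ k, ¬ G.Adj l k), X (Sum.inr (l, I l)) := by
  rw [phi, aeval_X]
  congr 1
  · apply Finset.prod_congr _ (fun _ _ => rfl)
    congr 1
    exact Subsingleton.elim _ _
  · apply Finset.prod_congr _ (fun _ _ => rfl)
    exact Finset.filter_congr_decidable ..

variable {n : ℕ}

/-- Shorthand for index strings on `K_{2,n}`. -/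
abbrev Idx (n : ℕ) : Type := (Fin 2 ⊕ Fin n) → Bool

lemma no_isolated (hn : 1 ≤ n) (v : Fin 2 ⊕ Fin n) :
    ¬ (∀ k, ¬ (completeBipartiteGraph (Fin 2) (Fin n)).Adj v k) := by
  intro h
  cases v with
  | inl a => exact h (Sum.inr ⟨0, hn⟩) (by simp)
  | inr b => exact h (Sum.inl 0) (by simp)

/-- The fundamental quadratic relations: swapping the value at one right-hand vertex between
two index strings agreeing on the left vertices gives a binomial in the toric ideal. -/
lemma swap_mem_ker (hn : 1 ≤ n) (I J : Idx n)
    (hagree : ∀ a : Fin 2, I (Sum.inl a) = J (Sum.inl a)) (l : Fin n) :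
    (X I * X J -
      X (Function.update I (Sum.inr l) (J (Sum.inr l))) *
        X (Function.update J (Sum.inr l) (I (Sum.inr l))) :
      MvPolynomial (Idx n) ℂ) ∈ toricIdeal (completeBipartiteGraph (Fin 2) (Fin n)) := by
  classical
  set G := completeBipartiteGraph (Fin 2) (Fin n) with hG
  set I' := Function.update I (Sum.inr l) (J (Sum.inr l)) with hI'
  set J' := Function.update J (Sum.inr l) (I (Sum.inr l)) with hJ'
  have key : phi G (X I * X J) = phi G (X I' * X J') := by
    rw [map_mul, map_mul, phi_X, phi_X, phi_X, phi_X]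
    have hfilt : (univ.filter (fun l : Fin 2 ⊕ Fin n => ∀ k, ¬ G.Adj l k)) = ∅ := by
      apply Finset.filter_eq_empty_iff.mpr
      intro v _
      exact no_isolated hn v
    rw [hfilt]
    simp only [Finset.prod_empty, mul_one]
    rw [← Finset.prod_mul_distrib, ← Finset.prod_mul_distrib]
    apply Finset.prod_congr rfl
    intro e he
    rw [SimpleGraph.mem_edgeFinset] at he
    induction e with
    | _ x y =>
      rw [SimpleGraph.mem_edgeSet] at he
      rw [Sym2.map_pair_eq, Sym2.map_pair_eq, Sym2.map_pair_eq, Sym2.map_pair_eq]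
      have upd_ne : ∀ (f : Idx n) (v : Fin 2 ⊕ Fin n) (b : Bool), v ≠ Sum.inr l →
          Function.update f (Sum.inr l) b v = f v := by
        intro f v b hv; exact Function.update_of_ne hv _ _
      by_cases hx : x = Sum.inr l
      · subst hx
        rcases y with a | b
        · have h1 : I' (Sum.inr l) = J (Sum.inr l) := Function.update_self _ _ _
          have h2 : J' (Sum.inr l) = I (Sum.inr l) := Function.update_self _ _ _
          have h3 : I' (Sum.inl a) = I (Sum.inl a) := upd_ne _ _ _ (by simp)
          have h4 : J' (Sum.inl a) = J (Sum.inl a) := upd_ne _ _ _ (by simp)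
          rw [h1, h2, h3, h4, hagree a]
          ring
        · exfalso; simp [hG] at he
      · by_cases hy : y = Sum.inr l
        · subst hy
          rcases x with a | b
          · have h1 : I' (Sum.inr l) = J (Sum.inr l) := Function.update_self _ _ _
            have h2 : J' (Sum.inr l) = I (Sum.inr l) := Function.update_self _ _ _
            have h3 : I' (Sum.inl a) = I (Sum.inl a) := upd_ne _ _ _ (by simp)
            have h4 : J' (Sum.inl a) = J (Sum.inl a) := upd_ne _ _ _ (by simp)
            rw [h1, h2, h3, h4, hagree a]
            ring
          · exfalso; simp [hG] at he
        · rw [hI', hJ', upd_ne I x _ hx, upd_ne I y _ hy, upd_ne J x _ hx, upd_ne J y _ hy]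
  rw [toricIdeal, RingHom.mem_ker]
  show phi G _ = 0
  rw [map_sub, key, sub_self]

lemma XX_eq_monomial {σ : Type} (A B : σ) :
    (X A * X B : MvPolynomial σ ℂ) =
      monomial (Finsupp.single A 1 + Finsupp.single B 1) (1 : ℂ) := by
  rw [X, X, monomial_mul, one_mul]

lemma deg_two {σ : Type} (A B : σ) :
    (Finsupp.single A 1 + Finsupp.single B 1).sum (fun _ e => e) = 2 := by
  classical
  rw [Finsupp.sum_add_index' (fun _ => rfl) (fun _ _ _ => rfl),
    Finsupp.sum_single_index rfl, Finsupp.sum_single_index rfl]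

lemma td2 {σ : Type} (A B C D : σ)
    (h : Finsupp.single A 1 + Finsupp.single B 1 ≠ Finsupp.single C 1 + Finsupp.single D 1) :
    (X A * X B - X C * X D : MvPolynomial σ ℂ).totalDegree = 2 := by
  classical
  rw [XX_eq_monomial, XX_eq_monomial]
  apply le_antisymm
  · apply le_trans (totalDegree_sub _ _)
    rw [totalDegree_monomial _ (one_ne_zero), totalDegree_monomial _ (one_ne_zero),
      deg_two, deg_two]
    simp
  · have hmem : (Finsupp.single A 1 + Finsupp.single B 1) ∈
        ((monomial (Finsupp.single A 1 + Finsupp.single B 1) (1 : ℂ)) -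
          monomial (Finsupp.single C 1 + Finsupp.single D 1) (1 : ℂ)).support := by
      rw [MvPolynomial.mem_support_iff, coeff_sub, coeff_monomial, coeff_monomial,
        if_pos rfl, if_neg (fun hh => h hh.symm)]
      norm_num
    have := MvPolynomial.le_totalDegree hmem
    rwa [deg_two] at this

/-- The monomial `p^M` of a table `M`. -/
noncomputable def monM (M : Idx n → ℕ) : MvPolynomial (Idx n) ℂ := ∏ I : Idx n, X I ^ M I

lemma monM_incr (M : Idx n → ℕ) (A : Idx n) :
    monM (Function.update M A (M A + 1)) = X A * monM M := by
  rw [monM, monM, ← Finset.mul_prod_erase univ (fun I => X I ^ M I) (Finset.mem_univ A),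
    ← Finset.mul_prod_erase univ _ (Finset.mem_univ A), Function.update_self,
    pow_succ', mul_assoc]
  refine congrArg (X A * ·) ?_
  refine congrArg (X A ^ M A * ·) ?_
  apply Finset.prod_congr rfl
  intro x hx
  rw [Function.update_of_ne (Finset.ne_of_mem_erase hx)]

/-- The three-way statistics of a table. -/
def stat (M : Idx n → ℕ) (i j k : Bool) (l : Fin n) : ℕ :=
  ∑ I : Idx n, if I (Sum.inl 0) = i ∧ I (Sum.inl 1) = j ∧ I (Sum.inr l) = k then M I else 0

def StatsEq (M N : Idx n → ℕ) : Prop := ∀ i j k l, stat M i j k l = stat N i j k l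

/-- The ℓ¹ distance between tables. -/
def dist (M N : Idx n → ℕ) : ℕ := ∑ I : Idx n, ((M I : ℤ) - N I).natAbs

/-- Hamming distance on the right coordinates. -/
def hd (I J : Idx n) : ℕ := (univ.filter (fun l : Fin n => I (Sum.inr l) ≠ J (Sum.inr l))).card

lemma sum_four (g : Idx n → ℤ) (A B C D : Idx n) (a b c d : ℤ)
    (hg : ∀ P, g P = (if P = A then a else 0) + (if P = B then b else 0) +
      (if P = C then c else 0) + (if P = D then d else 0)) :
    ∑ P : Idx n, g P = a + b + c + d := by
  simp only [hg, Finset.sum_add_distrib, Finset.sum_ite_eq', Finset.mem_univ, if_true]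

lemma exists_lt_of_sum_eq {f g : Idx n → ℕ} (h : ∑ I : Idx n, f I = ∑ I : Idx n, g I)
    (P : Idx n) (hP : g P < f P) : ∃ Q, f Q < g Q := by
  by_contra hc
  push_neg at hc
  have := Finset.sum_lt_sum (fun i (_ : i ∈ univ) => hc i) ⟨P, Finset.mem_univ P, hP⟩
  omega

lemma hd_le (I J : Idx n) : hd I J ≤ n := by
  calc hd I J ≤ (univ : Finset (Fin n)).card := Finset.card_filter_le _ _
  _ = n := by simp

lemma hd_update_lt (I J : Idx n) (l : Fin n) (hl : I (Sum.inr l) ≠ J (Sum.inr l)) :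
    hd I (Function.update J (Sum.inr l) (I (Sum.inr l))) < hd I J := by
  have hset : (univ.filter (fun m : Fin n =>
      I (Sum.inr m) ≠ Function.update J (Sum.inr l) (I (Sum.inr l)) (Sum.inr m))) =
      (univ.filter (fun m : Fin n => I (Sum.inr m) ≠ J (Sum.inr m))).erase l := by
    ext m
    by_cases hm : m = l
    · subst hm; simp
    · have : (Sum.inr m : Fin 2 ⊕ Fin n) ≠ Sum.inr l := by simp [hm]
      simp [Finset.mem_erase, hm, Function.update_of_ne this]
  rw [hd, hset]
  exact Finset.card_erase_lt_of_mem (by simp [hl])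

lemma exists_diff (I J : Idx n) (hIJ : I ≠ J)
    (hagree : ∀ a : Fin 2, I (Sum.inl a) = J (Sum.inl a)) :
    ∃ l : Fin n, I (Sum.inr l) ≠ J (Sum.inr l) := by
  by_contra hc
  push_neg at hc
  apply hIJ
  funext v
  cases v with
  | inl a => exact hagree a
  | inr b => exact hc b

lemma blockStat_eq (hn : 1 ≤ n) {M N : Idx n → ℕ} (h : StatsEq M N) (i j : Bool) :
    (∑ I : Idx n, if I (Sum.inl 0) = i ∧ I (Sum.inl 1) = j then M I else 0) =
    (∑ I : Idx n, if I (Sum.inl 0) = i ∧ I (Sum.inl 1) = j then N I else 0) := by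
  have key : ∀ (M : Idx n → ℕ),
      (∑ I : Idx n, if I (Sum.inl 0) = i ∧ I (Sum.inl 1) = j then M I else 0) =
      stat M i j true ⟨0, hn⟩ + stat M i j false ⟨0, hn⟩ := by
    intro M
    rw [stat, stat, ← Finset.sum_add_distrib]
    apply Finset.sum_congr rfl
    intro I _
    cases hI : I (Sum.inr ⟨0, hn⟩) <;> by_cases hc : I (Sum.inl 0) = i ∧ I (Sum.inl 1) = j <;>
      simp [hc, hI]
  rw [key M, key N, h, h]

lemma pair_exists (hn : 1 ≤ n) {M N : Idx n → ℕ} (h : StatsEq M N) (hMN : M ≠ N) :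
    ∃ I J : Idx n, N I < M I ∧ M J < N J ∧ (∀ a : Fin 2, I (Sum.inl a) = J (Sum.inl a)) := by
  have : ∃ P, M P ≠ N P := by
    by_contra hc; push_neg at hc; exact hMN (funext hc)
  obtain ⟨P, hP⟩ := this
  have hblock := blockStat_eq hn h (P (Sum.inl 0)) (P (Sum.inl 1))
  have hcondP : P (Sum.inl 0) = P (Sum.inl 0) ∧ P (Sum.inl 1) = P (Sum.inl 1) := ⟨rfl, rfl⟩
  rcases Nat.lt_or_ge (N P) (M P) with hlt | hge
  · obtain ⟨Q, hQ⟩ := exists_lt_of_sum_eq hblock P (by rw [if_pos hcondP, if_pos hcondP]; exact hlt)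
    by_cases hc : Q (Sum.inl 0) = P (Sum.inl 0) ∧ Q (Sum.inl 1) = P (Sum.inl 1)
    · rw [if_pos hc, if_pos hc] at hQ
      have hag : ∀ a : Fin 2, P (Sum.inl a) = Q (Sum.inl a) := by
        rintro ⟨av, ha⟩
        interval_cases av
        · exact hc.1.symm
        · exact hc.2.symm
      exact ⟨P, Q, hlt, hQ, hag⟩
    · rw [if_neg hc, if_neg hc] at hQ; exact absurd hQ (lt_irrefl 0)
  · have hlt : M P < N P := lt_of_le_of_ne hge hP
    obtain ⟨Q, hQ⟩ := exists_lt_of_sum_eq hblock.symm P (by rw [if_pos hcondP, if_pos hcondP]; exact hlt)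
    by_cases hc : Q (Sum.inl 0) = P (Sum.inl 0) ∧ Q (Sum.inl 1) = P (Sum.inl 1)
    · rw [if_pos hc, if_pos hc] at hQ
      have hag : ∀ a : Fin 2, Q (Sum.inl a) = P (Sum.inl a) := by
        rintro ⟨av, ha⟩
        interval_cases av
        · exact hc.1
        · exact hc.2
      exact ⟨Q, P, hQ, hlt, hag⟩
    · rw [if_neg hc, if_neg hc] at hQ; exact absurd hQ (lt_irrefl 0)

/-- Stats are preserved by a swap move. -/
lemma stat_swap (N N' : Idx n → ℕ) (J K J' K' : Idx n) (l : Fin n)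
    (hdiff : ∀ P, (N' P : ℤ) = N P + (if P = J' then 1 else 0) + (if P = K' then 1 else 0)
      - (if P = J then 1 else 0) - (if P = K then 1 else 0))
    (hJJ' : J ≠ J') (hJK' : J ≠ K') (hKJ' : K ≠ J') (hKK' : K ≠ K') (hJK : J ≠ K)
    (hJ'K' : J' ≠ K')
    (hblock : ∀ a : Fin 2, J (Sum.inl a) = K (Sum.inl a))
    (hJ'v : ∀ v, v ≠ Sum.inr l → J' v = J v) (hJ'l : J' (Sum.inr l) = K (Sum.inr l))
    (hK'v : ∀ v, v ≠ Sum.inr l → K' v = K v) (hK'l : K' (Sum.inr l) = J (Sum.inr l)) :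
    ∀ i j k l', stat N' i j k l' = stat N i j k l' := by
  intro i j k l'
  have hz : (stat N' i j k l' : ℤ) - (stat N i j k l' : ℤ) = 0 := by
    have cast1 : ∀ (M : Idx n → ℕ), (stat M i j k l' : ℤ) =
        ∑ I : Idx n, if I (Sum.inl 0) = i ∧ I (Sum.inl 1) = j ∧ I (Sum.inr l') = k
          then (M I : ℤ) else 0 := by
      intro M
      rw [stat, Nat.cast_sum]
      exact Finset.sum_congr rfl (fun I _ => by split <;> simp)
    rw [cast1, cast1, ← Finset.sum_sub_distrib]
    have hg : ∀ P : Idx n,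
        ((if P (Sum.inl 0) = i ∧ P (Sum.inl 1) = j ∧ P (Sum.inr l') = k then (N' P : ℤ) else 0)
          - (if P (Sum.inl 0) = i ∧ P (Sum.inl 1) = j ∧ P (Sum.inr l') = k then (N P : ℤ) else 0))
        = (if P = J' then (if J' (Sum.inl 0) = i ∧ J' (Sum.inl 1) = j ∧ J' (Sum.inr l') = k then (1:ℤ) else 0) else 0)
          + (if P = K' then (if K' (Sum.inl 0) = i ∧ K' (Sum.inl 1) = j ∧ K' (Sum.inr l') = k then (1:ℤ) else 0) else 0)
          + (if P = J then (if J (Sum.inl 0) = i ∧ J (Sum.inl 1) = j ∧ J (Sum.inr l') = k then (-1:ℤ) else 0) else 0)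
          + (if P = K then (if K (Sum.inl 0) = i ∧ K (Sum.inl 1) = j ∧ K (Sum.inr l') = k then (-1:ℤ) else 0) else 0) := by
      intro P
      have hdP := hdiff P
      by_cases h1 : P = J'
      · simp only [h1, if_true] at hdP ⊢
        rw [if_neg hJ'K', if_neg (Ne.symm hJJ'), if_neg (Ne.symm hKJ')] at hdP
        rw [if_neg hJ'K', if_neg (Ne.symm hJJ'), if_neg (Ne.symm hKJ')]
        split <;> omega
      · by_cases h2 : P = K'
        · simp only [h2, if_true] at hdP ⊢
          rw [if_neg (Ne.symm hJ'K'), if_neg (Ne.symm hJK'),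
            if_neg (Ne.symm hKK')] at hdP
          rw [if_neg (Ne.symm hJ'K'), if_neg (Ne.symm hJK'),
            if_neg (Ne.symm hKK')]
          split <;> omega
        · by_cases h3 : P = J
          · simp only [h3, if_true] at hdP ⊢
            rw [if_neg hJJ', if_neg hJK', if_neg hJK] at hdP
            rw [if_neg hJJ', if_neg hJK', if_neg hJK]
            split <;> omega
          · by_cases h4 : P = K
            · simp only [h4, if_true] at hdP ⊢
              rw [if_neg hKJ', if_neg hKK', if_neg (Ne.symm hJK)] at hdP
              rw [if_neg hKJ', if_neg hKK', if_neg (Ne.symm hJK)]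
              split <;> omega
            · rw [if_neg h1, if_neg h2, if_neg h3, if_neg h4] at hdP
              rw [if_neg h1, if_neg h2, if_neg h3, if_neg h4]
              split <;> omega
    rw [sum_four _ J' K' J K _ _ _ _ hg]
    by_cases hll : l' = l
    · subst hll
      have e1 : (J' (Sum.inl 0) = i ∧ J' (Sum.inl 1) = j ∧ J' (Sum.inr l') = k) ↔
          (K (Sum.inl 0) = i ∧ K (Sum.inl 1) = j ∧ K (Sum.inr l') = k) := by
        rw [hJ'v (Sum.inl 0) (by simp), hJ'v (Sum.inl 1) (by simp), hJ'l,
          hblock 0, hblock 1]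
      have e2 : (K' (Sum.inl 0) = i ∧ K' (Sum.inl 1) = j ∧ K' (Sum.inr l') = k) ↔
          (J (Sum.inl 0) = i ∧ J (Sum.inl 1) = j ∧ J (Sum.inr l') = k) := by
        rw [hK'v (Sum.inl 0) (by simp), hK'v (Sum.inl 1) (by simp), hK'l,
          hblock 0, hblock 1]
      rw [if_congr e1 rfl rfl, if_congr e2 rfl rfl]
      split <;> split <;> ring
    · have e1 : (J' (Sum.inl 0) = i ∧ J' (Sum.inl 1) = j ∧ J' (Sum.inr l') = k) ↔
          (J (Sum.inl 0) = i ∧ J (Sum.inl 1) = j ∧ J (Sum.inr l') = k) := by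
        rw [hJ'v (Sum.inl 0) (by simp), hJ'v (Sum.inl 1) (by simp),
          hJ'v (Sum.inr l') (by simp [hll])]
      have e2 : (K' (Sum.inl 0) = i ∧ K' (Sum.inl 1) = j ∧ K' (Sum.inr l') = k) ↔
          (K (Sum.inl 0) = i ∧ K (Sum.inl 1) = j ∧ K (Sum.inr l') = k) := by
        rw [hK'v (Sum.inl 0) (by simp), hK'v (Sum.inl 1) (by simp),
          hK'v (Sum.inr l') (by simp [hll])]
      rw [if_congr e1 rfl rfl, if_congr e2 rfl rfl]
      split <;> split <;> ring
  omega

/-- Distance change under a swap move. -/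
lemma dist_swap (M N N' : Idx n → ℕ) (J K J' K' : Idx n)
    (hdiff : ∀ P, (N' P : ℤ) = N P + (if P = J' then 1 else 0) + (if P = K' then 1 else 0)
      - (if P = J then 1 else 0) - (if P = K then 1 else 0))
    (hJJ' : J ≠ J') (hJK' : J ≠ K') (hKJ' : K ≠ J') (hKK' : K ≠ K') (hJK : J ≠ K)
    (hJ'K' : J' ≠ K')
    (hMJ : M J < N J) (hMK : M K < N K) :
    (dist M N' : ℤ) = dist M N - 2 + (if M J' ≤ N J' then 1 else -1)
      + (if M K' ≤ N K' then 1 else -1) := by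
  have cast1 : ∀ (A B : Idx n → ℕ), (dist A B : ℤ) = ∑ I : Idx n, (((A I : ℤ) - B I).natAbs : ℤ) := by
    intro A B; rw [dist, Nat.cast_sum]
  have key : (dist M N' : ℤ) - dist M N = ∑ P : Idx n,
      ((((M P : ℤ) - N' P).natAbs : ℤ) - (((M P : ℤ) - N P).natAbs : ℤ)) := by
    rw [cast1, cast1, ← Finset.sum_sub_distrib]
  have hg : ∀ P : Idx n,
      ((((M P : ℤ) - N' P).natAbs : ℤ) - (((M P : ℤ) - N P).natAbs : ℤ))
      = (if P = J' then (if M J' ≤ N J' then (1:ℤ) else -1) else 0)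
        + (if P = K' then (if M K' ≤ N K' then (1:ℤ) else -1) else 0)
        + (if P = J then (-1:ℤ) else 0) + (if P = K then (-1:ℤ) else 0) := by
    intro P
    have hdP := hdiff P
    by_cases h1 : P = J'
    · simp only [h1, if_true] at hdP ⊢
      rw [if_neg hJ'K', if_neg (Ne.symm hJJ'), if_neg (Ne.symm hKJ')] at hdP
      rw [if_neg hJ'K', if_neg (Ne.symm hJJ'), if_neg (Ne.symm hKJ')]
      split <;> omega
    · by_cases h2 : P = K'
      · simp only [h2, if_true] at hdP ⊢
        rw [if_neg (Ne.symm hJ'K'), if_neg (Ne.symm hJK'),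
          if_neg (Ne.symm hKK')] at hdP
        rw [if_neg (Ne.symm hJ'K'), if_neg (Ne.symm hJK'),
          if_neg (Ne.symm hKK')]
        split <;> omega
      · by_cases h3 : P = J
        · simp only [h3, if_true] at hdP ⊢
          rw [if_neg hJJ', if_neg hJK', if_neg hJK] at hdP
          rw [if_neg hJJ', if_neg hJK', if_neg hJK]
          omega
        · by_cases h4 : P = K
          · simp only [h4, if_true] at hdP ⊢
            rw [if_neg hKJ', if_neg hKK', if_neg (Ne.symm hJK)] at hdP
            rw [if_neg hKJ', if_neg hKK', if_neg (Ne.symm hJK)]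
            omega
          · rw [if_neg h1, if_neg h2, if_neg h3, if_neg h4] at hdP
            rw [if_neg h1, if_neg h2, if_neg h3, if_neg h4]
            omega
  rw [sum_four _ J' K' J K _ _ _ _ hg] at key
  linarith

/-- The main induction: two tables with equal stats are connected within the degree-2 part. -/
lemma main_induction (hn : 1 ≤ n) (t : ℕ) :
    ∀ M N : Idx n → ℕ, ∀ I J : Idx n, StatsEq M N → N I < M I → M J < N J →
    (∀ a : Fin 2, I (Sum.inl a) = J (Sum.inl a)) →
    dist M N * (n + 1) + hd I J ≤ t →
    monM M - monM N ∈ Ideal.span {f : MvPolynomial (Idx n) ℂ |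
      f ∈ toricIdeal (completeBipartiteGraph (Fin 2) (Fin n)) ∧ f.totalDegree = 2} := by
  induction t using Nat.strong_induction_on with
  | _ t IH =>
  intro M N I J hstat hI hJ hagree hmeas
  have hIJ : I ≠ J := by
    intro h; rw [h] at hI; exact absurd hJ (not_lt.mpr (le_of_lt hI))
  obtain ⟨l, hl⟩ := exists_diff I J hIJ hagree
  -- find K in the same block and same value at w_l with N K > M K
  have hcol := hstat (I (Sum.inl 0)) (I (Sum.inl 1)) (I (Sum.inr l)) l
  rw [stat, stat] at hcol
  obtain ⟨K, hK⟩ := exists_lt_of_sum_eq hcol I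
    (by rw [if_pos ⟨rfl, rfl, rfl⟩, if_pos ⟨rfl, rfl, rfl⟩]; exact hI)
  have hcondK : K (Sum.inl 0) = I (Sum.inl 0) ∧ K (Sum.inl 1) = I (Sum.inl 1) ∧
      K (Sum.inr l) = I (Sum.inr l) := by
    by_cases hc : K (Sum.inl 0) = I (Sum.inl 0) ∧ K (Sum.inl 1) = I (Sum.inl 1) ∧
        K (Sum.inr l) = I (Sum.inr l)
    · exact hc
    · rw [if_neg hc, if_neg hc] at hK; exact absurd hK (lt_irrefl 0)
  have hMK : M K < N K := by rwa [if_pos hcondK, if_pos hcondK] at hK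
  clear hcol hK
  set J' := Function.update J (Sum.inr l) (I (Sum.inr l)) with hJ'def
  have hJ'l : J' (Sum.inr l) = I (Sum.inr l) := Function.update_self _ _ _
  have hJ'v : ∀ v, v ≠ Sum.inr l → J' v = J v := fun v hv => Function.update_of_ne hv _ _
  have hKl : K (Sum.inr l) = I (Sum.inr l) := hcondK.2.2
  by_cases hJ'K : J' = K
  · -- one coordinate fix for free: recurse with pair (I, K)
    have hagK : ∀ a : Fin 2, I (Sum.inl a) = K (Sum.inl a) := by
      rintro ⟨av, ha⟩
      interval_cases av
      · exact hcondK.1.symm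
      · exact hcondK.2.1.symm
    have hhd : hd I K < hd I J := by
      rw [← hJ'K, hJ'def]; exact hd_update_lt I J l hl
    exact IH (dist M N * (n + 1) + hd I K)
      (lt_of_lt_of_le (Nat.add_lt_add_left hhd _) hmeas) M N I K hstat hI hMK hagK le_rfl
  · -- perform the swap move on N
    set K' := Function.update K (Sum.inr l) (J (Sum.inr l)) with hK'def
    have hK'l : K' (Sum.inr l) = J (Sum.inr l) := Function.update_self _ _ _
    have hK'v : ∀ v, v ≠ Sum.inr l → K' v = K v := fun v hv => Function.update_of_ne hv _ _
    -- distinctness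
    have hJK : J ≠ K := by
      intro h; exact hl (by rw [h]; exact hKl.symm)
    have hJJ' : J ≠ J' := by
      intro h; exact hl (((congrFun h (Sum.inr l)).trans hJ'l).symm)
    have hKK' : K ≠ K' := by
      intro h; exact hl (hKl.symm.trans ((congrFun h (Sum.inr l)).trans hK'l))
    have hJ'K' : J' ≠ K' := by
      intro h; exact hl (hJ'l.symm.trans ((congrFun h (Sum.inr l)).trans hK'l))
    have hKJ' : K ≠ J' := fun h => hJ'K h.symm
    have hJK' : J ≠ K' := by
      intro h
      apply hJ'K
      funext P
      by_cases hP : P = Sum.inr l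
      · subst hP; rw [hJ'l, hKl]
      · rw [hJ'v P hP, h]; exact hK'v P hP
    have hNJ : 1 ≤ N J := by omega
    have hNK : 1 ≤ N K := by omega
    -- the new table N'
    set N2 : Idx n → ℕ :=
      Function.update (Function.update N J (N J - 1)) K (N K - 1) with hN2def
    set Na : Idx n → ℕ := Function.update N2 J' (N2 J' + 1) with hNadef
    set N' : Idx n → ℕ := Function.update Na K' (Na K' + 1) with hN'def
    have hN2J : N2 J = N J - 1 := by
      rw [hN2def, Function.update_of_ne hJK, Function.update_self]
    have hN2K : N2 K = N K - 1 := by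
      rw [hN2def, Function.update_self]
    have hN2v : ∀ P, P ≠ J → P ≠ K → N2 P = N P := by
      intro P h1 h2
      rw [hN2def, Function.update_of_ne h2, Function.update_of_ne h1]
    have hNav : ∀ P, P ≠ J' → Na P = N2 P := by
      intro P h1; rw [hNadef, Function.update_of_ne h1]
    have hNaJ' : Na J' = N2 J' + 1 := by rw [hNadef, Function.update_self]
    have hN'v : ∀ P, P ≠ K' → N' P = Na P := by
      intro P h1; rw [hN'def, Function.update_of_ne h1]
    have hN'K' : N' K' = Na K' + 1 := by rw [hN'def, Function.update_self]
    have hvJ : N' J = N J - 1 := by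
      rw [hN'v J hJK', hNav J hJJ', hN2J]
    have hvK : N' K = N K - 1 := by
      rw [hN'v K hKK', hNav K hKJ', hN2K]
    have hvJ' : N' J' = N J' + 1 := by
      rw [hN'v J' hJ'K', hNaJ', hN2v J' (Ne.symm hJJ') (Ne.symm hKJ')]
    have hvK' : N' K' = N K' + 1 := by
      rw [hN'K', hNav K' (Ne.symm hJ'K'), hN2v K' (Ne.symm hJK') (Ne.symm hKK')]
    have hvo : ∀ P, P ≠ J → P ≠ K → P ≠ J' → P ≠ K' → N' P = N P := by
      intro P h1 h2 h3 h4
      rw [hN'v P h4, hNav P h3, hN2v P h1 h2]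
    have hdiff : ∀ P, (N' P : ℤ) = N P + (if P = J' then 1 else 0) + (if P = K' then 1 else 0)
        - (if P = J then 1 else 0) - (if P = K then 1 else 0) := by
      intro P
      by_cases h1 : P = J'
      · subst h1
        rw [hvJ', if_pos rfl, if_neg hJ'K', if_neg (Ne.symm hJJ'), if_neg (Ne.symm hKJ')]
        push_cast; ring
      · by_cases h2 : P = K'
        · subst h2
          rw [hvK', if_neg (Ne.symm hJ'K'), if_pos rfl, if_neg (Ne.symm hJK'),
            if_neg (Ne.symm hKK')]
          push_cast; ring
        · by_cases h3 : P = J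
          · subst h3
            rw [hvJ, if_neg hJJ', if_neg hJK', if_pos rfl, if_neg hJK]
            omega
          · by_cases h4 : P = K
            · subst h4
              rw [hvK, if_neg hKJ', if_neg hKK', if_neg (Ne.symm hJK), if_pos rfl]
              omega
            · rw [hvo P h3 h4 h1 h2, if_neg h1, if_neg h2, if_neg h3, if_neg h4]
              ring
    -- the monomial identity
    have hmonN : monM N = X J * (X K * monM N2) := by
      have e1 : Function.update (Function.update N2 K (N2 K + 1)) J
          ((Function.update N2 K (N2 K + 1)) J + 1) = N := by
        funext P
        by_cases hP : P = J
        · subst hP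
          rw [Function.update_self, Function.update_of_ne hJK, hN2J]
          omega
        · rw [Function.update_of_ne hP]
          by_cases hP2 : P = K
          · subst hP2
            rw [Function.update_self, hN2K]
            omega
          · rw [Function.update_of_ne hP2, hN2v P hP hP2]
      calc monM N
          = monM (Function.update (Function.update N2 K (N2 K + 1)) J
              ((Function.update N2 K (N2 K + 1)) J + 1)) := by rw [e1]
        _ = X J * monM (Function.update N2 K (N2 K + 1)) := monM_incr _ _
        _ = X J * (X K * monM N2) := by rw [monM_incr]
    have hmonN' : monM N' = X K' * (X J' * monM N2) := by
      rw [hN'def, monM_incr, hNadef, monM_incr]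
    have hmove : monM N - monM N' = (X J * X K - X J' * X K') * monM N2 := by
      rw [hmonN, hmonN']; ring
    -- the quadratic generator
    have hagJK : ∀ a : Fin 2, J (Sum.inl a) = K (Sum.inl a) := by
      rintro ⟨av, ha⟩
      interval_cases av
      · exact (hagree ⟨0, by omega⟩).symm.trans hcondK.1.symm
      · exact (hagree ⟨1, by omega⟩).symm.trans hcondK.2.1.symm
    have hker := swap_mem_ker hn J K hagJK l
    have hupd1 : Function.update J (Sum.inr l) (K (Sum.inr l)) = J' := by
      rw [hKl, hJ'def]
    have hupd2 : Function.update K (Sum.inr l) (J (Sum.inr l)) = K' := by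
      rw [hK'def]
    rw [hupd1, hupd2] at hker
    have hne : Finsupp.single J 1 + Finsupp.single K 1 ≠
        Finsupp.single J' 1 + Finsupp.single K' 1 := by
      intro h
      have hJ2 := DFunLike.congr_fun h J
      rw [Finsupp.add_apply, Finsupp.add_apply, Finsupp.single_apply, Finsupp.single_apply,
        Finsupp.single_apply, Finsupp.single_apply, if_pos rfl, if_neg (Ne.symm hJK),
        if_neg (Ne.symm hJJ'), if_neg (Ne.symm hJK')] at hJ2
      omega
    have htd : (X J * X K - X J' * X K' : MvPolynomial (Idx n) ℂ).totalDegree = 2 :=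
      td2 _ _ _ _ hne
    have hmovemem : monM N - monM N' ∈ Ideal.span {f : MvPolynomial (Idx n) ℂ |
        f ∈ toricIdeal (completeBipartiteGraph (Fin 2) (Fin n)) ∧ f.totalDegree = 2} := by
      rw [hmove]
      exact Ideal.mul_mem_right _ _ (Ideal.subset_span ⟨hker, htd⟩)
    have hstat' : StatsEq M N' := fun i j k l' => (hstat i j k l').trans
      (stat_swap N N' J K J' K' l hdiff hJJ' hJK' hKJ' hKK' hJK hJ'K' hagJK
        hJ'v (hJ'l.trans hKl.symm) hK'v hK'l i j k l').symm
    have hdist := dist_swap M N N' J K J' K' hdiff hJJ' hJK' hKJ' hKK' hJK hJ'K' hJ hMK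
    have hsplit : monM M - monM N = (monM M - monM N') + (monM N' - monM N) := by ring
    by_cases hcase : M J' ≤ N J' ∧ M K' ≤ N K'
    · -- distance stays the same, Hamming distance drops
      have hdisteq : dist M N' = dist M N := by
        rw [if_pos hcase.1, if_pos hcase.2] at hdist
        omega
      have hIJ'ne : I ≠ J' := by
        intro h; rw [← h] at hcase
        exact absurd hcase.1 (not_le.mpr hI)
      have hIK : I ≠ K := by
        intro h; rw [h] at hI; exact absurd hMK (not_lt.mpr (le_of_lt hI))
      have hIK' : I ≠ K' := by
        intro h; exact hl ((congrFun h (Sum.inr l)).trans hK'l)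
      have hN'I : N' I = N I := hvo I hIJ hIK hIJ'ne hIK'
      have hI2 : N' I < M I := by rw [hN'I]; exact hI
      have hJ2 : M J' < N' J' := by rw [hvJ']; omega
      have hagIJ' : ∀ a : Fin 2, I (Sum.inl a) = J' (Sum.inl a) := fun a =>
        (hagree a).trans (hJ'v (Sum.inl a) (by simp)).symm
      have hhd : hd I J' < hd I J := by
        rw [hJ'def]; exact hd_update_lt I J l hl
      have hrec := IH (dist M N' * (n + 1) + hd I J')
        (by rw [hdisteq]; exact lt_of_lt_of_le (Nat.add_lt_add_left hhd _) hmeas)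
        M N' I J' hstat' hI2 hJ2 hagIJ' le_rfl
      rw [hsplit]
      refine Ideal.add_mem _ hrec ?_
      rw [← neg_sub]
      exact neg_mem hmovemem
    · -- distance strictly decreases
      have hsum : (if M J' ≤ N J' then (1:ℤ) else -1) + (if M K' ≤ N K' then (1:ℤ) else -1)
          ≤ 0 := by
        rcases not_and_or.mp hcase with h | h <;> split_ifs <;> omega
      have hle : (dist M N' : ℤ) ≤ (dist M N : ℤ) - 2 := by linarith
      have hdistle : dist M N' + 2 ≤ dist M N := by omega
      by_cases hMN' : M = N'
      · rw [← hMN'] at hmovemem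
        rw [← neg_sub]
        exact neg_mem hmovemem
      · obtain ⟨I₂, J₂, h1, h2, h3⟩ := pair_exists hn hstat' hMN'
        have hbound : dist M N' * (n + 1) + hd I₂ J₂ < t := by
          have h4 := hd_le I₂ J₂
          have h5 : dist M N' * (n + 1) + hd I₂ J₂ < (dist M N' + 1) * (n + 1) := by
            have : hd I₂ J₂ < n + 1 := Nat.lt_succ_of_le h4
            calc dist M N' * (n + 1) + hd I₂ J₂
                < dist M N' * (n + 1) + (n + 1) := Nat.add_lt_add_left this _
              _ = (dist M N' + 1) * (n + 1) := by ring
          have h6 : (dist M N' + 1) * (n + 1) ≤ dist M N * (n + 1) :=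
            Nat.mul_le_mul_right _ (by omega)
          exact lt_of_lt_of_le h5 (le_trans h6 (le_trans (Nat.le_add_right _ _) hmeas))
        have hrec := IH _ hbound M N' I₂ J₂ hstat' h1 h2 h3 le_rfl
        rw [hsplit]
        refine Ideal.add_mem _ hrec ?_
        rw [← neg_sub]
        exact neg_mem hmovemem

end Aux

/-- in `K_{2,n}`, if two nonnegative tables `M`, `N` have the same counts
`b_{ij,k,l}` (number of entries with value `i` at `v₁`, `j` at `v₂` and `k` at `w_l`, summed
with multiplicity) for all `i, j, k` and all `l`, then the binomial `p^M - p^N` lies in the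
ideal generated by the quadratic elements of `I_{K_{2,n}}`. -/
theorem completeBipartite_two_quadratic_moves (n : ℕ) (hn : 1 ≤ n)
    (M N : ((Fin 2 ⊕ Fin n) → Bool) → ℕ)
    (hb : ∀ i j k : Bool, ∀ l : Fin n,
      (∑ I : (Fin 2 ⊕ Fin n) → Bool,
        if I (Sum.inl 0) = i ∧ I (Sum.inl 1) = j ∧ I (Sum.inr l) = k then M I else 0) =
      (∑ I : (Fin 2 ⊕ Fin n) → Bool,
        if I (Sum.inl 0) = i ∧ I (Sum.inl 1) = j ∧ I (Sum.inr l) = k then N I else 0)) :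
    ((∏ I : (Fin 2 ⊕ Fin n) → Bool, X I ^ M I) -
        (∏ I : (Fin 2 ⊕ Fin n) → Bool, X I ^ N I) :
        MvPolynomial ((Fin 2 ⊕ Fin n) → Bool) ℂ) ∈
      Ideal.span {f : MvPolynomial ((Fin 2 ⊕ Fin n) → Bool) ℂ |
        f ∈ toricIdeal (completeBipartiteGraph (Fin 2) (Fin n)) ∧ f.totalDegree = 2} := by
  by_cases hMN : M = N
  · rw [hMN, sub_self]
    exact Ideal.zero_mem _
  · have hstat : StatsEq M N := fun i j k l => hb i j k l
    obtain ⟨I, J, h1, h2, h3⟩ := pair_exists hn hstat hMN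
    exact main_induction hn (dist M N * (n + 1) + hd I J) M N I J hstat h1 h2 h3 le_rfl



end BinaryGraphModels
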